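/- Let G be a finite p-group of maximal class with an abelian subgroup A of index p, and let H be a proper subgroup of G with H not contained in A. Then |N_G(H) : H| = p. -/

import Mathlib

open scoped commutatorElement IsMulCommutative

private lemma aux_p_mul_le {p a b n : ℕ} (hp : p.Prime) (hab : a ∣ b) (hne : a ≠ b)
    (hbn : b ∣ p ^ n) : p * a ≤ b := by
  obtain ⟨j, hj, rfl⟩ := (Nat.dvd_prime_pow hp).mp hbn
  obtain ⟨i, hi, rfl⟩ := (Nat.dvd_prime_pow hp).mp (hab.trans hbn)
  have hij : i ≤ j := (Nat.pow_dvd_pow_iff_le_right hp.one_lt).mp hab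
  have hij' : i < j := lt_of_le_of_ne hij (fun e => hne (by rw [e]))
  calc p * p ^ i = p ^ (i + 1) := by rw [pow_succ, mul_comm]
    _ ≤ p ^ j := Nat.pow_le_pow_right hp.one_lt.le hij'

private lemma aux_card_mul_relindex {G : Type*} [Group G] {T S : Subgroup G} (h : T ≤ S) :
    Nat.card T * T.relIndex S = Nat.card S := by
  have e : Nat.card (T.subgroupOf S) = Nat.card T :=
    Nat.card_congr (Subgroup.subgroupOfEquivOfLe h).toEquiv
  rw [Subgroup.relIndex, ← e]
  exact Subgroup.card_mul_index (T.subgroupOf S)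

private lemma aux_lcs_stab {G : Type*} [Group G] {i : ℕ}
    (hi : Subgroup.lowerCentralSeries (⊤ : Subgroup G) (i + 1) = Subgroup.lowerCentralSeries (⊤ : Subgroup G) i) :
    ∀ j, i ≤ j → Subgroup.lowerCentralSeries (⊤ : Subgroup G) j = Subgroup.lowerCentralSeries (⊤ : Subgroup G) i := by
  intro j hij
  induction hij with
  | refl => rfl
  | step h ih => rw [lowerCentralSeries_succ, ih, ← lowerCentralSeries_succ, hi]

private lemma aux_lcs_card_ge {G : Type*} [Group G] [Finite G] {p n : ℕ} (hp : p.Prime)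
    (hcard : Nat.card G = p ^ n)
    (hbot : Subgroup.lowerCentralSeries (⊤ : Subgroup G) (n - 1) = ⊥)
    (hne : ∀ m < n - 1, Subgroup.lowerCentralSeries (⊤ : Subgroup G) m ≠ ⊥) :
    p ^ (n - 2) ≤ Nat.card (Subgroup.lowerCentralSeries (⊤ : Subgroup G) 1) := by
  rcases Nat.lt_or_ge n 2 with hn | hn
  · have : n - 2 = 0 := by omega
    rw [this, pow_zero]
    exact Nat.card_pos
  have claim : ∀ k, k + 1 ≤ n - 1 → p ^ k ≤ Nat.card (Subgroup.lowerCentralSeries (⊤ : Subgroup G) (n - 1 - k)) := by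
    intro k
    induction k with
    | zero => intro _; simpa using Nat.one_le_iff_ne_zero.mpr (Nat.card_pos).ne'
    | succ k ih =>
        intro hk
        have ihk := ih (by omega)
        set i := n - 1 - (k + 1) with hidef
        have hi1 : i + 1 = n - 1 - k := by omega
        have hle : Subgroup.lowerCentralSeries (⊤ : Subgroup G) (i + 1) ≤ Subgroup.lowerCentralSeries (⊤ : Subgroup G) i :=
          lowerCentralSeries_antitone _ (Nat.le_succ i)
        have hnelcs : Subgroup.lowerCentralSeries (⊤ : Subgroup G) (i + 1) ≠ Subgroup.lowerCentralSeries (⊤ : Subgroup G) i := by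
          intro heq
          have hstab := aux_lcs_stab heq (n - 1) (by omega)
          exact hne i (by omega) (by rw [← hstab, hbot])
        have hcd : Nat.card (Subgroup.lowerCentralSeries (⊤ : Subgroup G) (i + 1)) ∣
            Nat.card (Subgroup.lowerCentralSeries (⊤ : Subgroup G) i) := Subgroup.card_dvd_of_le hle
        have hcne : Nat.card (Subgroup.lowerCentralSeries (⊤ : Subgroup G) (i + 1)) ≠
            Nat.card (Subgroup.lowerCentralSeries (⊤ : Subgroup G) i) := by
          intro heq
          exact hnelcs (Subgroup.eq_of_le_of_card_ge hle heq.ge)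
        have hdn : Nat.card (Subgroup.lowerCentralSeries (⊤ : Subgroup G) i) ∣ p ^ n := by
          rw [← hcard]; exact Subgroup.card_subgroup_dvd_card _
        have hstep := aux_p_mul_le hp hcd hcne hdn
        calc p ^ (k + 1) = p * p ^ k := by rw [pow_succ, mul_comm]
          _ ≤ p * Nat.card (Subgroup.lowerCentralSeries (⊤ : Subgroup G) (i + 1)) := by
              rw [hi1]; exact Nat.mul_le_mul_left p ihk
          _ ≤ Nat.card (Subgroup.lowerCentralSeries (⊤ : Subgroup G) i) := hstep
  have h1 : n - 1 - (n - 2) = 1 := by omega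
  have := claim (n - 2) (by omega)
  rwa [h1] at this

/-- In a finite `p`-group `G` of maximal class with an abelian subgroup `A` of index
`p`, any proper subgroup `H` not contained in `A` satisfies `|N_G(H) : H| = p`. -/
theorem stmt18 {G : Type*} [Group G] [Finite G] (p n : ℕ) (hp : p.Prime)
    (hcard : Nat.card G = p ^ n)
    (hmax : Subgroup.lowerCentralSeries (⊤ : Subgroup G) (n - 1) = ⊥ ∧ ∀ m < n - 1, Subgroup.lowerCentralSeries (⊤ : Subgroup G) m ≠ ⊥)
    (A : Subgroup G) (hA : IsMulCommutative A) (hAi : A.index = p)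
    (H : Subgroup G) (hH : H < ⊤) (hHA : ¬ H ≤ A) :
    H.relIndex (Subgroup.normalizer (H : Set G)) = p := by
  haveI := hA
  obtain ⟨hbot, hlow⟩ := hmax
  have hp1 : 1 < p := hp.one_lt
  -- dispatch degenerate cases n = 0, n = 1
  rcases Nat.lt_or_ge n 2 with hn2 | hn2
  · interval_cases n
    · -- n = 0 : G is trivial, no proper subgroup exists
      exfalso
      have h1 : Nat.card G = 1 := by simpa using hcard
      have hsub : (⊤ : Subgroup G) ≤ H := by
        intro x _
        have : ∀ y : G, y = 1 := by
          intro y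
          haveI := (Nat.card_eq_one_iff_unique.mp h1).1
          exact Subsingleton.elim y 1
        rw [this x]; exact H.one_mem
      exact hH.ne (le_antisymm le_top hsub)
    · -- n = 1 : Subgroup.lowerCentralSeries (⊤ : Subgroup G) 0 = ⊥ means G trivial, contradicting |G| = p
      exfalso
      have h0 : (⊤ : Subgroup G) = ⊥ := by simpa using hbot
      have : ∀ y : G, y = 1 := by
        intro y
        have : y ∈ (⊥ : Subgroup G) := h0 ▸ Subgroup.mem_top y
        simpa using this
      have h1 : Nat.card G = 1 := by
        haveI : Subsingleton G := ⟨fun a b => by rw [this a, this b]⟩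
        exact Nat.card_eq_one_iff_unique.mpr ⟨inferInstance, inferInstance⟩
      rw [h1] at hcard
      simp at hcard
      omega
  -- main case : n ≥ 2
  -- A is maximal
  have hmaxA : ∀ S : Subgroup G, A ≤ S → S ≠ ⊤ → S = A := by
    intro S hAS hSne
    have hdvd : S.index ∣ p := hAi ▸ Subgroup.index_dvd_of_le hAS
    rcases (Nat.Prime.eq_one_or_self_of_dvd hp _ hdvd) with h1 | hpe
    · exact absurd (Subgroup.index_eq_one.mp h1) hSne
    · have hmul := Subgroup.relIndex_mul_index hAS
      rw [hAi, hpe] at hmul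
      have hrel : A.relIndex S = 1 := by
        have h3 : A.relIndex S * p = 1 * p := by rw [one_mul]; exact hmul
        exact Nat.eq_of_mul_eq_mul_right hp.pos h3
      exact le_antisymm (Subgroup.relIndex_eq_one.mp hrel) hAS
  have hAne : A ≠ ⊤ := by
    intro e
    rw [e, Subgroup.index_top] at hAi
    omega
  have hnil : Group.IsNilpotent G := nilpotent_iff_lowerCentralSeries.mpr ⟨n - 1, hbot⟩
  have hnc : NormalizerCondition G := normalizerCondition_of_isNilpotent
  have hAnormal : A.Normal := by
    rw [← Subgroup.normalizer_eq_top_iff]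
    by_contra hne
    have heq := hmaxA (Subgroup.normalizer (A : Set G)) Subgroup.le_normalizer hne
    exact absurd heq (ne_of_gt (hnc A (lt_top_iff_ne_top.mpr hAne)))
  haveI := hAnormal
  obtain ⟨h, hhH, hhA⟩ := SetLike.not_le_iff_exists.mp hHA
  -- the homomorphism φ : A → A, a ↦ (h a h⁻¹) a⁻¹
  set c : MulAut ↥A := MulAut.conjNormal h with hc
  set φ : ↥A →* ↥A := c.toMonoidHom * (MonoidHom.id ↥A)⁻¹ with hφdef
  have hφ : ∀ a : ↥A, (φ a : G) = h * a * h⁻¹ * (a : G)⁻¹ := by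
    intro a
    show ((c a * a⁻¹ : ↥A) : G) = _
    push_cast
    rw [hc, MulAut.conjNormal_apply]
  set R : Subgroup G := φ.range.map A.subtype with hRdef
  have hRA : R ≤ A := Subgroup.map_subtype_le φ.range
  have hmemR : ∀ a : ↥A, h * ↑a * h⁻¹ * (↑a)⁻¹ ∈ R := by
    intro a
    exact Subgroup.mem_map.mpr ⟨φ a, ⟨a, rfl⟩, hφ a⟩
  have htop : A ⊔ Subgroup.zpowers h = ⊤ := by
    by_contra hne
    have hmem : h ∈ A ⊔ Subgroup.zpowers h :=
      (le_sup_right : Subgroup.zpowers h ≤ A ⊔ Subgroup.zpowers h) (Subgroup.mem_zpowers h)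
    rw [hmaxA _ le_sup_left hne] at hmem
    exact hhA hmem
  have hclosure : Subgroup.closure ((A : Set G) ∪ {h}) = ⊤ := by
    rw [Subgroup.closure_union, Subgroup.closure_eq, ← Subgroup.zpowers_eq_closure, htop]
  -- R is normal
  have hcφ : ∀ x : ↥A, c (φ x) = φ (c x) := by
    intro x
    show c (c x * x⁻¹) = c (c x) * (c x)⁻¹
    rw [map_mul, map_inv]
  have hRnormal : R.Normal := by
    rw [← Subgroup.normalizer_eq_top_iff]
    have hAn : A ≤ Subgroup.normalizer (R : Set G) := by
      intro a ha
      rw [Subgroup.mem_normalizer_iff]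
      intro g
      constructor
      · intro hg
        have : a * g = g * a := Subgroup.mul_comm_of_mem_isMulCommutative A ha (hRA hg)
        have e : a * g * a⁻¹ = g := by rw [this]; group
        rwa [e]
      · intro hg
        have hcomm : a * (a * g * a⁻¹) = (a * g * a⁻¹) * a :=
          Subgroup.mul_comm_of_mem_isMulCommutative A ha (hRA hg)
        have e : a * g * a⁻¹ = g := by
          have h2 : a⁻¹ * (a * (a * g * a⁻¹)) = a⁻¹ * (a * g * a⁻¹ * a) := by rw [hcomm]
          calc a * g * a⁻¹ = a⁻¹ * (a * (a * g * a⁻¹)) := by group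
            _ = a⁻¹ * (a * g * a⁻¹ * a) := h2
            _ = g := by group
        rwa [e] at hg
    have hhn : h ∈ Subgroup.normalizer (R : Set G) := by
      rw [Subgroup.mem_normalizer_iff]
      intro g
      constructor
      · rintro hg
        obtain ⟨x, ⟨b, rfl⟩, rfl⟩ := Subgroup.mem_map.mp hg
        have e : h * (A.subtype (φ b)) * h⁻¹ = A.subtype (φ (c b)) := by
          rw [← hcφ]
          simp only [Subgroup.coe_subtype, hc, MulAut.conjNormal_apply]
        rw [e]
        exact Subgroup.mem_map.mpr ⟨φ (c b), ⟨c b, rfl⟩, rfl⟩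
      · intro hg
        obtain ⟨x, ⟨b, rfl⟩, hx⟩ := Subgroup.mem_map.mp hg
        have hcs : c.symm (φ b) = φ (c.symm b) := by
          have := hcφ (c.symm b)
          rw [MulEquiv.apply_symm_apply] at this
          calc c.symm (φ b) = c.symm (c (φ (c.symm b))) := by rw [this]
            _ = φ (c.symm b) := by rw [MulEquiv.symm_apply_apply]
        have e : g = A.subtype (φ (c.symm b)) := by
          rw [← hcs]
          have : (A.subtype (φ b) : G) = h * g * h⁻¹ := hx
          have e2 : (c.symm (φ b) : G) = h⁻¹ * (A.subtype (φ b)) * h := by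
            simp only [Subgroup.coe_subtype, hc, MulAut.conjNormal_symm_apply]
          rw [Subgroup.coe_subtype, e2, this]
          group
        rw [e]
        exact Subgroup.mem_map.mpr ⟨φ (c.symm b), ⟨c.symm b, rfl⟩, rfl⟩
    have hsup : A ⊔ Subgroup.zpowers h ≤ Subgroup.normalizer (R : Set G) :=
      sup_le hAn (Subgroup.zpowers_le.mpr hhn)
    rw [htop] at hsup
    exact top_le_iff.mp hsup
  haveI := hRnormal
  -- all commutators with elements of A land in R
  have hPkey : ∀ (x : G) (a : G), a ∈ A → ⁅a, x⁆ ∈ R := by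
    intro x
    have hx : x ∈ Subgroup.closure ((A : Set G) ∪ {h}) := hclosure ▸ Subgroup.mem_top x
    induction hx using Subgroup.closure_induction with
    | mem y hy =>
        intro a ha
        rcases hy with hy | hy
        · have : a * y = y * a := Subgroup.mul_comm_of_mem_isMulCommutative A ha hy
          have e : ⁅a, y⁆ = 1 := by
            rw [commutatorElement_def, this]; group
          rw [e]; exact R.one_mem
        · rcases hy with rfl
          have e : ⁅a, y⁆ = (y * a * y⁻¹ * a⁻¹)⁻¹ := by
            rw [commutatorElement_def]; group
          rw [e]
          exact R.inv_mem (hmemR ⟨a, ha⟩)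
    | one =>
        intro a _
        have e : ⁅a, (1 : G)⁆ = 1 := by simp
        rw [e]; exact R.one_mem
    | mul y z hy hz ihy ihz =>
        intro a ha
        have e : ⁅a, y * z⁆ = ⁅a, y⁆ * (y * ⁅a, z⁆ * y⁻¹) := by
          simp only [commutatorElement_def]; group
        rw [e]
        exact R.mul_mem (ihy a ha) (hRnormal.conj_mem _ (ihz a ha) y)
    | inv y hy ihy =>
        intro a ha
        have e : ⁅a, y⁻¹⁆ = y⁻¹ * ⁅a, y⁆⁻¹ * y := by
          simp only [commutatorElement_def]; group
        rw [e]
        exact (by simpa using hRnormal.conj_mem _ (R.inv_mem (ihy a ha)) y⁻¹)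
  -- the quotient G/R is abelian
  haveI : Fact p.Prime := ⟨hp⟩
  set f : G ⧸ R →* G ⧸ A := QuotientGroup.map R A (MonoidHom.id G) (show R ≤ A.comap (MonoidHom.id G) from fun x hx => hRA hx)
    with hfdef
  have hcardQA : Nat.card (G ⧸ A) = p := by rw [← Subgroup.index_eq_card, hAi]
  haveI : IsCyclic (G ⧸ A) := isCyclic_of_prime_card hcardQA
  have hcent : f.ker ≤ Subgroup.center (G ⧸ R) := by
    intro q hq
    obtain ⟨x, rfl⟩ := QuotientGroup.mk_surjective q
    have hxA : x ∈ A := by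
      have h1 : f (x : G ⧸ R) = 1 := hq
      rw [hfdef, QuotientGroup.map_mk] at h1
      exact (QuotientGroup.eq_one_iff x).mp h1
    rw [Subgroup.mem_center_iff]
    intro z
    obtain ⟨y, rfl⟩ := QuotientGroup.mk_surjective z
    show ((y * x : G) : G ⧸ R) = ((x * y : G) : G ⧸ R)
    rw [QuotientGroup.eq]
    have hk := hPkey y⁻¹ x⁻¹ (A.inv_mem hxA)
    have e : (y * x)⁻¹ * (x * y) = ⁅x⁻¹, y⁻¹⁆ := by
      rw [commutatorElement_def]; group
    rwa [e]
  have hQcomm : ∀ u v : G ⧸ R, u * v = v * u := fun u v =>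
    commutative_of_cyclic_center_quotient f hcent u v
  have hDR : commutator G ≤ R := by
    rw [commutator_def, Subgroup.commutator_le]
    intro g1 _ g2 _
    have e : ((⁅g1, g2⁆ : G) : G ⧸ R) = 1 := by
      rw [commutatorElement_def]
      simp only [QuotientGroup.mk_mul, QuotientGroup.mk_inv]
      rw [hQcomm (g1 : G ⧸ R) (g2 : G ⧸ R)]
      group
    exact (QuotientGroup.eq_one_iff _).mp e
  -- cardinality of A and bound on the kernel of φ
  have hcardA : Nat.card A = p ^ (n - 1) := by
    have hmul := Subgroup.card_mul_index A
    rw [hAi, hcard] at hmul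
    have hn1 : p ^ n = p ^ (n - 1) * p := by
      rw [← pow_succ]; congr 1; omega
    rw [hn1] at hmul
    exact Nat.eq_of_mul_eq_mul_right hp.pos hmul
  have hchain : p ^ (n - 2) ≤ Nat.card (Subgroup.lowerCentralSeries (⊤ : Subgroup G) 1) :=
    aux_lcs_card_ge hp hcard hbot hlow
  have hlcsR : Subgroup.lowerCentralSeries (⊤ : Subgroup G) 1 ≤ R := le_trans (le_of_eq lowerCentralSeries_one) hDR
  have hcardR : p ^ (n - 2) ≤ Nat.card R :=
    le_trans hchain (Subgroup.card_le_of_le hlcsR)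
  have hcardrange : Nat.card φ.range = Nat.card R :=
    Nat.card_congr (Subgroup.equivMapOfInjective φ.range A.subtype A.subtype_injective).toEquiv
  have hker : Nat.card φ.ker * Nat.card φ.range = p ^ (n - 1) := by
    have h1 := Subgroup.card_mul_index φ.ker
    have h2 : φ.ker.index = Nat.card φ.range := by
      rw [Subgroup.index_eq_card]
      exact Nat.card_congr (QuotientGroup.quotientKerEquivRange φ).toEquiv
    rw [h2] at h1
    rw [h1, hcardA]
  have hkerle : Nat.card φ.ker ≤ p := by
    by_contra hlt
    push_neg at hlt
    have hrge : p ^ (n - 2) ≤ Nat.card φ.range := hcardrange ▸ hcardR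
    have : p ^ (n - 1) ≥ (p + 1) * p ^ (n - 2) := by
      calc (p + 1) * p ^ (n - 2) ≤ Nat.card φ.ker * Nat.card φ.range :=
            Nat.mul_le_mul hlt hrge
        _ = p ^ (n - 1) := hker
    have he : p ^ (n - 1) = p * p ^ (n - 2) := by
      rw [mul_comm, ← pow_succ]
      congr 1; omega
    rw [he] at this
    have hpow : 0 < p ^ (n - 2) := Nat.pow_pos hp.pos
    have := Nat.le_of_mul_le_mul_right this hpow
    omega
  -- the normalizer
  set N := Subgroup.normalizer (H : Set G) with hNdef
  have hHN : H ≤ N := Subgroup.le_normalizer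
  have hHltN : H < N := hnc H hH
  have hNA : ¬ N ≤ A := fun hle => hhA (hle (hHN hhH))
  have hsupN : A ⊔ N = ⊤ := by
    by_contra hne
    have hle : N ≤ A ⊔ N := le_sup_right
    rw [hmaxA _ le_sup_left hne] at hle
    exact hNA hle
  have hsupH : A ⊔ H = ⊤ := by
    by_contra hne
    have hle : H ≤ A ⊔ H := le_sup_right
    rw [hmaxA _ le_sup_left hne] at hle
    exact hHA hle
  have hrelN : A.relIndex N = p := by
    rw [← Subgroup.relIndex_sup_left, hsupN, Subgroup.relIndex_top_right, hAi]
  have hrelH : A.relIndex H = p := by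
    rw [← Subgroup.relIndex_sup_left, hsupH, Subgroup.relIndex_top_right, hAi]
  have hcardN : Nat.card N = p * Nat.card ↥(A ⊓ N) := by
    have h1 : (A ⊓ N).relIndex N = p := by rw [Subgroup.inf_relIndex_right, hrelN]
    have h2 := aux_card_mul_relindex (inf_le_right : A ⊓ N ≤ N)
    rw [h1] at h2
    rw [← h2, mul_comm]
  have hcardH : Nat.card H = p * Nat.card ↥(A ⊓ H) := by
    have h1 : (A ⊓ H).relIndex H = p := by rw [Subgroup.inf_relIndex_right, hrelH]
    have h2 := aux_card_mul_relindex (inf_le_right : A ⊓ H ≤ H)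
    rw [h1] at h2
    rw [← h2, mul_comm]
  -- upper bound : |A ⊓ N| ≤ p |A ⊓ H|
  set T : Subgroup ↥A := (A ⊓ N).subgroupOf A with hTdef
  set ψ : ↥T →* ↥A := φ.comp T.subtype with hψdef
  have hTcard : Nat.card T = Nat.card ↥(A ⊓ N) :=
    Nat.card_congr (Subgroup.subgroupOfEquivOfLe inf_le_left).toEquiv
  have hψrange : ψ.range ≤ (A ⊓ H).subgroupOf A := by
    rintro x ⟨t, rfl⟩
    rw [Subgroup.mem_subgroupOf]
    constructor
    · exact SetLike.coe_mem _
    · show ((φ (T.subtype t)) : G) ∈ H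
      rw [hφ]
      have h2 : ((t : ↥A) : G) ∈ A ⊓ Subgroup.normalizer (H : Set G) := Subgroup.mem_subgroupOf.mp t.2
      have haN : ((T.subtype t : ↥A) : G) ∈ Subgroup.normalizer (H : Set G) := h2.2
      have hconj : ((T.subtype t : ↥A) : G) * h⁻¹ * ((T.subtype t : ↥A) : G)⁻¹ ∈ H :=
        (Subgroup.mem_normalizer_iff.mp haN h⁻¹).mp (H.inv_mem hhH)
      have e : h * ((T.subtype t : ↥A) : G) * h⁻¹ * ((T.subtype t : ↥A) : G)⁻¹
          = h * (((T.subtype t : ↥A) : G) * h⁻¹ * ((T.subtype t : ↥A) : G)⁻¹) := by group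
      rw [e]
      exact H.mul_mem hhH hconj
  have hψcard : Nat.card T = Nat.card ψ.ker * Nat.card ψ.range := by
    have h1 := Subgroup.card_mul_index ψ.ker
    have h2 : ψ.ker.index = Nat.card ψ.range := by
      rw [Subgroup.index_eq_card]
      exact Nat.card_congr (QuotientGroup.quotientKerEquivRange ψ).toEquiv
    rw [h2] at h1
    rw [← h1, mul_comm]
  have hkerψ : Nat.card ψ.ker ≤ Nat.card φ.ker := by
    have hmap : ψ.ker.map T.subtype ≤ φ.ker := by
      rintro x ⟨t, ht, rfl⟩
      exact ht
    calc Nat.card ψ.ker = Nat.card (ψ.ker.map T.subtype) :=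
          Nat.card_congr (Subgroup.equivMapOfInjective ψ.ker T.subtype T.subtype_injective).toEquiv
      _ ≤ Nat.card φ.ker := Subgroup.card_le_of_le hmap
  have hrangeψ : Nat.card ψ.range ≤ Nat.card ↥(A ⊓ H) := by
    calc Nat.card ψ.range ≤ Nat.card ↥((A ⊓ H).subgroupOf A) := Subgroup.card_le_of_le hψrange
      _ = Nat.card ↥(A ⊓ H) := Nat.card_congr (Subgroup.subgroupOfEquivOfLe inf_le_left).toEquiv
  have hupper : Nat.card ↥(A ⊓ N) ≤ p * Nat.card ↥(A ⊓ H) := by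
    calc Nat.card ↥(A ⊓ N) = Nat.card T := hTcard.symm
      _ = Nat.card ψ.ker * Nat.card ψ.range := hψcard
      _ ≤ p * Nat.card ↥(A ⊓ H) := Nat.mul_le_mul (le_trans hkerψ hkerle) hrangeψ
  -- lower bound : p |A ⊓ H| ≤ |A ⊓ N|
  have hcardHN : Nat.card H < Nat.card N := by
    have hle := Subgroup.card_le_of_le hHltN.le
    rcases lt_or_eq_of_le hle with hlt | heq
    · exact hlt
    · exact absurd (Subgroup.eq_of_le_of_card_ge hHltN.le heq.ge) hHltN.ne
  have hltKM : Nat.card ↥(A ⊓ H) < Nat.card ↥(A ⊓ N) := by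
    rw [hcardH, hcardN] at hcardHN
    exact Nat.lt_of_mul_lt_mul_left hcardHN
  have hdvdKM : Nat.card ↥(A ⊓ H) ∣ Nat.card ↥(A ⊓ N) :=
    Subgroup.card_dvd_of_le (inf_le_inf_left A hHltN.le)
  have hMdvd : Nat.card ↥(A ⊓ N) ∣ p ^ n := by
    rw [← hcard]; exact Subgroup.card_subgroup_dvd_card _
  have hlower : p * Nat.card ↥(A ⊓ H) ≤ Nat.card ↥(A ⊓ N) :=
    aux_p_mul_le hp hdvdKM (ne_of_lt hltKM) hMdvd
  have hMeq : Nat.card ↥(A ⊓ N) = p * Nat.card ↥(A ⊓ H) := le_antisymm hupper hlower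
  -- conclusion
  have hNH : Nat.card N = p * Nat.card H := by
    rw [hcardN, hMeq, hcardH]
  have hfinal := aux_card_mul_relindex hHN
  rw [hNH] at hfinal
  have hH0 : 0 < Nat.card H := Nat.card_pos
  have : Nat.card H * H.relIndex N = Nat.card H * p := by
    rw [hfinal, mul_comm]
  exact Nat.eq_of_mul_eq_mul_left hH0 this
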